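/- Let V be a finite-dimensional real inner product space of dimension 2q with q ≥ 1, and let T : V →ₗ[ℝ] V be an invertible linear map. Then the following are equivalent: (i) for every linear map J : V →ₗ[ℝ] V with J ∘ J = −id and ⟪J x, J y⟫ = ⟪x, y⟫ for all x, y, the conjugate T ∘ J ∘ T⁻¹ also satisfies ⟪(T∘J∘T⁻¹) x, (T∘J∘T⁻¹) y⟫ = ⟪x, y⟫ for all x, y; (ii) T is conformal, i.e. there exists c > 0 such that ⟪T x, T y⟫ = c·⟪x, y⟫ for all x, y ∈ V. (This is the linear-algebraic core of Corollary 3.5: the induced fiber morphism on twistor spaces is holomorphic if and only if the map is conformal.) -/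

import Mathlib

open scoped RealInnerProductSpace

open FiniteDimensional


/-- Every even-dimensional real inner product space admits a compatible complex structure. -/
lemma exists_compatible_J (W : Type*) [NormedAddCommGroup W] [InnerProductSpace ℝ W]
    [FiniteDimensional ℝ W] (hW : Even (Module.finrank ℝ W)) :
    ∃ J : W →ₗ[ℝ] W, (∀ x, J (J x) = -x) ∧ (∀ x y : W, ⟪J x, J y⟫ = ⟪x, y⟫) := by
  obtain ⟨n, hn⟩ := hW
  set E := EuclideanSpace ℂ (Fin n) with hE
  have hfE : Module.finrank ℝ E = Module.finrank ℝ W := by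
    have h1 : Module.finrank ℝ ℂ * Module.finrank ℂ E = Module.finrank ℝ E :=
      Module.finrank_mul_finrank ℝ ℂ E
    rw [Complex.finrank_real_complex, finrank_euclideanSpace_fin] at h1
    omega
  let φ : W ≃ₗᵢ[ℝ] E :=
    (stdOrthonormalBasis ℝ W).repr.trans
      (((stdOrthonormalBasis ℝ E).reindex (finCongr hfE)).repr.symm)
  have hI : ∀ u v : E, ⟪(Complex.I • u : E), (Complex.I • v : E)⟫ = ⟪u, v⟫ := by
    intro u v
    simp only [E, PiLp.inner_apply, PiLp.smul_apply, smul_eq_mul, Complex.inner]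
    refine Finset.sum_congr rfl fun i _ => ?_
    have h2 : (starRingEnd ℂ) (Complex.I * u i) * (Complex.I * v i)
        = (-(Complex.I * Complex.I)) * ((starRingEnd ℂ) (u i) * v i) := by
      rw [map_mul, Complex.conj_I]; ring
    show (⟪(Complex.I * u i : ℂ), (Complex.I * v i : ℂ)⟫ : ℝ) = ⟪u i, v i⟫
    rw [Complex.inner, Complex.inner, mul_comm, h2, Complex.I_mul_I, mul_comm (v i)]; norm_num
  let J : W →ₗ[ℝ] W :=
    { toFun := fun x => φ.symm (Complex.I • φ x)
      map_add' := fun a b => by simp [smul_add]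
      map_smul' := fun r a => by
        simp only [LinearIsometryEquiv.map_smul, RingHom.id_apply]
        rw [smul_comm Complex.I r, LinearIsometryEquiv.map_smul] }
  refine ⟨J, ?_, ?_⟩
  · intro x
    show φ.symm (Complex.I • φ (φ.symm (Complex.I • φ x))) = -x
    simp [smul_smul, Complex.I_mul_I, neg_one_smul, map_neg]
  · intro x y
    show ⟪φ.symm (Complex.I • φ x), φ.symm (Complex.I • φ y)⟫ = ⟪x, y⟫
    rw [φ.symm.inner_map_map, hI, φ.inner_map_map]

set_option maxHeartbeats 1000000 in
/-- Given an orthonormal pair `e, f` in an even-dimensional real inner product space,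
there is a compatible complex structure `J` with `J e = f` and `J f = -e`. -/
lemma exists_compatible_J_pair {V : Type*} [NormedAddCommGroup V] [InnerProductSpace ℝ V]
    [FiniteDimensional ℝ V] (hV : Even (Module.finrank ℝ V))
    {e f : V} (he : ‖e‖ = 1) (hf : ‖f‖ = 1) (hef : ⟪e, f⟫ = 0) :
    ∃ J : V →ₗ[ℝ] V, (∀ x, J (J x) = -x) ∧ (∀ x y : V, ⟪J x, J y⟫ = ⟪x, y⟫) ∧
      J e = f ∧ J f = -e := by
  have hee : ⟪e, e⟫ = 1 := by
    rw [real_inner_self_eq_norm_mul_norm, he]; norm_num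
  have hff : ⟪f, f⟫ = 1 := by
    rw [real_inner_self_eq_norm_mul_norm, hf]; norm_num
  have hfe : ⟪f, e⟫ = 0 := by rw [real_inner_comm]; exact hef
  -- the pair is orthonormal, hence linearly independent
  have hon : Orthonormal ℝ ![e, f] := by
    rw [orthonormal_iff_ite]
    intro i j
    fin_cases i <;> fin_cases j <;>
      simp [hee, hff, hef, hfe, he, hf]
  have hrange : Set.range ![e, f] = {e, f} := by
    ext x
    constructor
    · rintro ⟨i, rfl⟩; fin_cases i <;> simp
    · rintro (rfl | rfl)
      exacts [⟨0, rfl⟩, ⟨1, rfl⟩]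
  set sp : Submodule ℝ V := Submodule.span ℝ {e, f} with hsp
  have hspan_rank : Module.finrank ℝ sp = 2 := by
    rw [hsp, ← hrange, finrank_span_eq_card hon.linearIndependent]
    simp
  set K : Submodule ℝ V := spᗮ with hKdef
  have hKrank : Module.finrank ℝ sp + Module.finrank ℝ K = Module.finrank ℝ V :=
    Submodule.finrank_add_finrank_orthogonal sp
  have hKeven : Even (Module.finrank ℝ K) := by
    obtain ⟨m, hm⟩ := hV
    refine ⟨m - 1, ?_⟩
    omega
  obtain ⟨J₀, hJ₀sq, hJ₀inner⟩ := exists_compatible_J K hKeven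
  -- basic orthogonality facts
  have hesp : e ∈ sp := Submodule.subset_span (by simp)
  have hfsp : f ∈ sp := Submodule.subset_span (by simp)
  have heK : ∀ w : K, ⟪e, (w : V)⟫ = 0 := fun w => w.2 e hesp
  have hfK : ∀ w : K, ⟪f, (w : V)⟫ = 0 := fun w => w.2 f hfsp
  have heKperp : e ∈ Kᗮ := by rw [hKdef, Submodule.orthogonal_orthogonal]; exact hesp
  have hfKperp : f ∈ Kᗮ := by rw [hKdef, Submodule.orthogonal_orthogonal]; exact hfsp
  set P : V →L[ℝ] K := K.orthogonalProjectionOnto with hPdef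
  have hPe : P e = 0 := Submodule.orthogonalProjectionOnto_apply_of_mem_orthogonal heKperp
  have hPf : P f = 0 := Submodule.orthogonalProjectionOnto_apply_of_mem_orthogonal hfKperp
  have hPK : ∀ w : K, P (w : V) = w := fun w =>
    Submodule.orthogonalProjectionOnto_mem_subspace_eq_self w
  -- orthogonal decomposition
  have hdecomp : ∀ x : V, x = ⟪e, x⟫ • e + ⟪f, x⟫ • f + (P x : V) := by
    intro x
    set y := x - ⟪e, x⟫ • e - ⟪f, x⟫ • f with hy
    have hyK : y ∈ K := by
      rw [hKdef, Submodule.mem_orthogonal]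
      intro u hu
      induction hu using Submodule.span_induction with
      | mem u hu =>
        rcases hu with rfl | rfl <;>
          simp [hy, inner_sub_right, inner_smul_right, hee, hff, hef, hfe, he, hf]
      | zero => simp
      | add u v _ _ h1 h2 => rw [inner_add_left, h1, h2]; ring
      | smul c u _ h1 => rw [real_inner_smul_left, h1]; ring
    have hPx : (P x : V) = y := by
      have : P x = P y + ⟪e, x⟫ • P e + ⟪f, x⟫ • P f := by
        rw [← map_smul, ← map_smul, ← map_add, ← map_add]
        congr 1
        rw [hy]; abel
      rw [this, hPe, hPf, smul_zero, smul_zero, add_zero, add_zero]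
      exact congrArg Subtype.val (hPK ⟨y, hyK⟩)
    rw [hPx, hy]; abel
  -- inner product expansion
  have hinner : ∀ x y : V,
      ⟪x, y⟫ = ⟪e, x⟫ * ⟪e, y⟫ + ⟪f, x⟫ * ⟪f, y⟫ + ⟪((P x : V)), ((P y : V))⟫ := by
    intro x y
    conv_lhs => rw [hdecomp x, hdecomp y]
    have h1 : ⟪(P x : V), e⟫ = 0 := by rw [real_inner_comm]; exact heK _
    have h2 : ⟪(P x : V), f⟫ = 0 := by rw [real_inner_comm]; exact hfK _
    simp [inner_add_left, inner_add_right, real_inner_smul_left, real_inner_smul_right,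
      hee, hff, hef, hfe, heK, hfK, h1, h2, he, hf]
    ring
  -- define J
  set J : V →ₗ[ℝ] V :=
    ((innerSL ℝ e).toLinearMap).smulRight f - ((innerSL ℝ f).toLinearMap).smulRight e
      + K.subtype ∘ₗ J₀ ∘ₗ (P : V →ₗ[ℝ] K) with hJdef
  have hJapp : ∀ x : V, J x = ⟪e, x⟫ • f - ⟪f, x⟫ • e + (J₀ (P x) : V) := by
    intro x
    simp [hJdef, LinearMap.smulRight_apply]
  -- components of J x
  have hJe' : ∀ x : V, ⟪e, J x⟫ = -⟪f, x⟫ := by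
    intro x
    rw [hJapp x]
    simp [inner_add_right, inner_sub_right, inner_smul_right, hee, hef, heK, he]
  have hJf' : ∀ x : V, ⟪f, J x⟫ = ⟪e, x⟫ := by
    intro x
    rw [hJapp x]
    simp [inner_add_right, inner_sub_right, inner_smul_right, hff, hfe, hfK, hf]
  have hJP : ∀ x : V, P (J x) = J₀ (P x) := by
    intro x
    rw [hJapp x, map_add, map_sub, map_smul, map_smul, hPe, hPf, hPK]
    simp
  refine ⟨J, ?_, ?_, ?_, ?_⟩
  · intro x
    rw [hJapp (J x), hJe', hJf', hJP, hJ₀sq]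
    have hcoe : ((-(P x) : K) : V) = -((P x : K) : V) := rfl
    rw [hcoe, neg_smul]
    nth_rewrite 4 [hdecomp x]
    abel
  · intro x y
    rw [hJapp x, hJapp y]
    have h1 : ∀ w : K, ⟪(w : V), e⟫ = 0 := fun w => by rw [real_inner_comm]; exact heK w
    have h2 : ∀ w : K, ⟪(w : V), f⟫ = 0 := fun w => by rw [real_inner_comm]; exact hfK w
    have h3 : ⟪((J₀ (P x) : K) : V), ((J₀ (P y) : K) : V)⟫ = ⟪((P x : K) : V), ((P y : K) : V)⟫ := by
      have := hJ₀inner (P x) (P y)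
      rwa [Submodule.coe_inner, Submodule.coe_inner] at this
    rw [hinner x y]
    simp [inner_add_left, inner_add_right, inner_sub_left, inner_sub_right,
      real_inner_smul_left, real_inner_smul_right, hee, hff, hef, hfe, heK, hfK, h1, h2, h3, he, hf]
    ring
  · rw [hJapp e, hee, hfe, hPe]
    simp
  · rw [hJapp f, hef, hff, hPf]
    simp
/-- Linear-algebraic core of Corollary 3.5: an invertible linear map `T` of a
`2q`-dimensional real inner product space (`q ≥ 1`) conjugates every compatible
complex structure to a compatible complex structure if and only if `T` is conformal. -/
theorem conjugation_preserves_compatible_structures_iff_conformal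
    {V : Type*} [NormedAddCommGroup V] [InnerProductSpace ℝ V] [FiniteDimensional ℝ V]
    (q : ℕ) (hq : 1 ≤ q) (hdim : Module.finrank ℝ V = 2 * q)
    (T : V ≃ₗ[ℝ] V) :
    ((∀ J : V →ₗ[ℝ] V, (∀ x, J (J x) = -x) → (∀ x y : V, ⟪J x, J y⟫ = ⟪x, y⟫) →
        ∀ x y : V, ⟪T (J (T.symm x)), T (J (T.symm y))⟫ = ⟪x, y⟫) ↔
      (∃ c : ℝ, 0 < c ∧ ∀ x y : V, ⟪T x, T y⟫ = c * ⟪x, y⟫)) := by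
  have hEven : Even (Module.finrank ℝ V) := ⟨q, by omega⟩
  constructor
  · -- hard direction
    intro h
    -- Step 0: T maps orthogonal vectors to orthogonal vectors
    have horth : ∀ x y : V, ⟪x, y⟫ = 0 → ⟪T x, T y⟫ = 0 := by
      intro x y hxy
      rcases eq_or_ne x 0 with rfl | hx
      · simp
      rcases eq_or_ne y 0 with rfl | hy
      · simp
      set e := ‖x‖⁻¹ • x with hedef
      set f := ‖y‖⁻¹ • y with hfdef
      have hnx : ‖x‖ ≠ 0 := norm_ne_zero_iff.mpr hx
      have hny : ‖y‖ ≠ 0 := norm_ne_zero_iff.mpr hy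
      have he : ‖e‖ = 1 := by
        rw [hedef, norm_smul, norm_inv, norm_norm, inv_mul_cancel₀ hnx]
      have hf : ‖f‖ = 1 := by
        rw [hfdef, norm_smul, norm_inv, norm_norm, inv_mul_cancel₀ hny]
      have hef : ⟪e, f⟫ = 0 := by
        rw [hedef, hfdef, real_inner_smul_left, real_inner_smul_right, hxy]
        ring
      obtain ⟨J, hJ1, hJ2, hJe, hJf⟩ := exists_compatible_J_pair hEven he hf hef
      have key := h J hJ1 hJ2 (T e) (T f)
      rw [T.symm_apply_apply, T.symm_apply_apply, hJe, hJf, map_neg] at key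
      -- key : ⟪T f, -(T e)⟫ = ⟪T e, T f⟫
      rw [inner_neg_right, real_inner_comm] at key
      have hTef : ⟪T e, T f⟫ = 0 := by linarith
      have : ⟪T e, T f⟫ = ‖x‖⁻¹ * (‖y‖⁻¹ * ⟪T x, T y⟫) := by
        rw [hedef, hfdef, map_smul, map_smul, real_inner_smul_left, real_inner_smul_right]
      rw [this] at hTef
      have h1 : (‖x‖:ℝ)⁻¹ ≠ 0 := inv_ne_zero hnx
      have h2 : (‖y‖:ℝ)⁻¹ ≠ 0 := inv_ne_zero hny
      field_simp at hTef
      simpa using hTef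
    -- Step 1: S := T* ∘ T has every vector as an eigenvector
    set S : V →ₗ[ℝ] V := LinearMap.adjoint (T : V →ₗ[ℝ] V) ∘ₗ (T : V →ₗ[ℝ] V) with hSdef
    have hS : ∀ x y : V, ⟪S x, y⟫ = ⟪T x, T y⟫ := by
      intro x y
      rw [hSdef]
      simp only [LinearMap.comp_apply]
      rw [LinearMap.adjoint_inner_left]
      rfl
    have heig : ∀ x : V, ∃ a : ℝ, S x = a • x := by
      intro x
      rcases eq_or_ne x 0 with rfl | hx
      · exact ⟨0, by simp⟩
      have hmem : S x ∈ (ℝ ∙ x) := by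
        rw [← Submodule.orthogonal_orthogonal (ℝ ∙ x)]
        rw [Submodule.mem_orthogonal]
        intro u hu
        have hxu : ⟪x, u⟫ = 0 := hu x (Submodule.mem_span_singleton_self x)
        rw [real_inner_comm, hS]
        exact horth x u hxu
      rw [Submodule.mem_span_singleton] at hmem
      obtain ⟨a, ha⟩ := hmem
      exact ⟨a, ha.symm⟩
    -- Step 2: such an S is a scalar
    have hnontriv : Nontrivial V := by
      apply Module.nontrivial_of_finrank_pos (R := ℝ)
      omega
    obtain ⟨x₀, hx₀⟩ := exists_ne (0 : V)
    obtain ⟨c, hc⟩ := heig x₀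
    have hscalar : ∀ y : V, S y = c • y := by
      intro y
      rcases eq_or_ne y 0 with rfl | hy
      · simp
      obtain ⟨a, ha⟩ := heig y
      by_cases hdep : y ∈ (ℝ ∙ x₀)
      · rw [Submodule.mem_span_singleton] at hdep
        obtain ⟨t, rfl⟩ := hdep
        rw [map_smul, hc, smul_comm]
      · obtain ⟨b, hb⟩ := heig (x₀ + y)
        rw [map_add, hc, ha, smul_add] at hb
        have hkey : (b - c) • x₀ = (a - b) • y := by
          rw [sub_smul, sub_smul, sub_eq_sub_iff_add_eq_add, ← hb]
          abel
        have hab : a = b := by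
          by_contra hab
          have : y = ((a - b)⁻¹ * (b - c)) • x₀ := by
            rw [mul_smul, hkey, smul_smul, inv_mul_cancel₀ (sub_ne_zero.mpr hab), one_smul]
          exact hdep (this ▸ Submodule.smul_mem _ _ (Submodule.mem_span_singleton_self x₀))
        rw [hab, sub_self, zero_smul] at hkey
        have hbc : b = c := by
          rcases smul_eq_zero.mp hkey with h0 | h0
          · have := sub_eq_zero.mp h0; linarith
          · exact absurd h0 hx₀
        rw [ha, hab, hbc]
    -- Step 3: conclude
    have hcpos : 0 < c := by
      have h1 : ⟪S x₀, x₀⟫ = ‖T x₀‖ ^ 2 := by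
        rw [hS, ← real_inner_self_eq_norm_sq]
      rw [hscalar, real_inner_smul_left] at h1
      have h2 : (0:ℝ) < ‖T x₀‖ ^ 2 := by
        have : T x₀ ≠ 0 := fun hz => hx₀ (by simpa using congrArg T.symm hz)
        exact pow_pos (norm_pos_iff.mpr this) 2
      have h3 : (0:ℝ) < ⟪x₀, x₀⟫ := by
        rw [real_inner_self_eq_norm_sq]
        exact pow_pos (norm_pos_iff.mpr hx₀) 2
      nlinarith
    refine ⟨c, hcpos, fun x y => ?_⟩
    rw [← hS, hscalar, real_inner_smul_left]
  · -- easy direction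
    rintro ⟨c, hc, hT⟩ J hJ1 hJ2 x y
    have hsymm : ∀ u v : V, ⟪T.symm u, T.symm v⟫ = c⁻¹ * ⟪u, v⟫ := by
      intro u v
      have := hT (T.symm u) (T.symm v)
      rw [T.apply_symm_apply, T.apply_symm_apply] at this
      rw [this, inv_mul_cancel_left₀ (ne_of_gt hc)]
    rw [hT, hJ2, hsymm, mul_inv_cancel_left₀ (ne_of_gt hc)]
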